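/- The full time-splitting spectral scheme conserves the discrete mass of the wave function at every step: ‖ψ^{h,n}‖_{ℓ²} = ‖ψ^{h,0}‖_{ℓ²} for all n ≥ 1, where ‖ψ‖²_{ℓ²} = ((b-a)/M)∑_{j=0}^{M-1}|ψ_j|², and one step consists of (i) exact Fourier-multiplier evolution ψ*_j = (1/M)∑_ℓ e^{-ih Δt ω_ℓ²/2} ψ̂^n_ℓ e^{iω_ℓ(x_j-a)} followed by (ii) multiplication by a unimodular phase ψ^{n+1}_j = e^{-iΥ_j Δt/h} ψ*_j with Υ_j real. -/

import Mathlib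

open Complex Real Finset

lemma geo_nat {M : ℕ} (w : ℂ) (hw : w ^ M = 1) :
    ∑ t ∈ Finset.range M, w ^ t = if w = 1 then (M : ℂ) else 0 := by
  split_ifs with h1
  · simp [h1]
  · rw [geom_sum_eq h1, hw]; simp

lemma geo_Icc {M : ℕ} (hM : 0 < M) {c : ℤ} (hc : 2 * c = (M : ℤ)) (w : ℂ)
    (hw0 : w ≠ 0) (hw : w ^ M = 1) :
    ∑ ℓ ∈ Finset.Icc (-c) (c - 1), w ^ ℓ = if w = 1 then (M : ℂ) else 0 := by
  have key : ∑ ℓ ∈ Finset.Icc (-c) (c - 1), w ^ ℓ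
      = w ^ (-c) * ∑ t ∈ Finset.range M, w ^ t := by
    rw [Finset.mul_sum]
    refine Finset.sum_nbij' (fun ℓ => (ℓ + c).toNat) (fun t => (t : ℤ) - c) ?_ ?_ ?_ ?_ ?_
    · intro ℓ hℓ; simp only [Finset.mem_Icc] at hℓ; simp only [Finset.mem_range]; omega
    · intro t ht; simp only [Finset.mem_range] at ht; simp only [Finset.mem_Icc]; omega
    · intro ℓ hℓ; simp only [Finset.mem_Icc] at hℓ; omega
    · intro t ht; simp only [Finset.mem_range] at ht; omega
    · intro ℓ hℓ; simp only [Finset.mem_Icc] at hℓ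
      rw [← zpow_natCast, ← zpow_add₀ hw0, Int.toNat_of_nonneg (by omega)]
      ring_nf
  rw [key, geo_nat w hw]
  split_ifs with h1
  · simp [h1]
  · simp

lemma z_pow_M {M : ℕ} (hM : 0 < M) :
    (Complex.exp (2 * Real.pi / M * Complex.I)) ^ (M : ℕ) = 1 := by
  rw [← Complex.exp_nat_mul]
  have hM' : (M : ℂ) ≠ 0 := Nat.cast_ne_zero.mpr hM.ne'
  have : (M : ℂ) * (2 * Real.pi / M * Complex.I) = 2 * Real.pi * Complex.I := by
    field_simp
  rw [this, Complex.exp_two_pi_mul_I]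

lemma z_zpow_eq_one_iff {M : ℕ} (hM : 0 < M) (k : ℤ) :
    (Complex.exp (2 * Real.pi / M * Complex.I)) ^ k = 1 ↔ (M : ℤ) ∣ k := by
  rw [← Complex.exp_int_mul, Complex.exp_eq_one_iff]
  have hM' : (M : ℂ) ≠ 0 := Nat.cast_ne_zero.mpr hM.ne'
  have hπ : (Real.pi : ℂ) ≠ 0 := Complex.ofReal_ne_zero.mpr Real.pi_ne_zero
  constructor
  · rintro ⟨n, hn⟩
    refine ⟨n, ?_⟩
    have h2 : (k : ℂ) = n * M := by
      field_simp at hn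
      have h1 := mul_right_cancel₀ Complex.I_ne_zero
        (by linear_combination (2*Real.pi*Complex.I) * hn : (k:ℂ) * (2*Real.pi) * Complex.I = (n * M * (2*Real.pi)) * Complex.I)
      have h2 := mul_right_cancel₀ (mul_ne_zero two_ne_zero hπ : (2*(Real.pi:ℂ)) ≠ 0)
        (by linear_combination h1 : (k:ℂ) * (2*Real.pi) = (n*M) * (2*Real.pi))
      exact h2
    have h3 : (k : ℂ) = ((M * n : ℤ) : ℂ) := by push_cast; linear_combination h2
    exact_mod_cast h3
  · rintro ⟨n, rfl⟩
    exact ⟨n, by push_cast; field_simp⟩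

theorem time_splitting_spectral_scheme_conserves_mass
    (M : ℕ) (hM : 0 < M) (hMeven : Even M)
    (a b h Δt : ℝ) (hab : a < b) (hh : 0 < h) (hΔt : 0 < Δt)
    (x : ℕ → ℝ) (hx : ∀ j : ℕ, x j = a + j * (b - a) / M)
    (ω : ℤ → ℝ) (hω : ∀ ℓ : ℤ, ω ℓ = 2 * Real.pi * ℓ / (b - a))
    (ψ ψstar : ℕ → Fin M → ℂ) (ψhat : ℕ → ℤ → ℂ) (Υ : ℕ → Fin M → ℝ)
    (hψhat : ∀ n (ℓ : ℤ), ψhat n ℓ =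
      ∑ j : Fin M, ψ n j * Complex.exp (-Complex.I * (ω ℓ) * (x j - a)))
    (hstep1 : ∀ n (j : Fin M), ψstar n j =
      (1 / (M : ℂ)) * ∑ ℓ ∈ Finset.Icc (-(M : ℤ) / 2) ((M : ℤ) / 2 - 1),
        Complex.exp (-Complex.I * h * Δt * (ω ℓ) ^ 2 / 2) * ψhat n ℓ *
          Complex.exp (Complex.I * (ω ℓ) * (x j - a)))
    (hstep2 : ∀ n (j : Fin M), ψ (n + 1) j =
      Complex.exp (-Complex.I * (Υ n j) * Δt / h) * ψstar n j) :
    ∀ n : ℕ, 1 ≤ n →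
      Real.sqrt (((b - a) / M) * ∑ j : Fin M, ‖ψ n j‖ ^ 2) =
      Real.sqrt (((b - a) / M) * ∑ j : Fin M, ‖ψ 0 j‖ ^ 2) := by
  have hba : (b - a) ≠ 0 := sub_ne_zero.mpr hab.ne'
  have hM0 : (M : ℝ) ≠ 0 := Nat.cast_ne_zero.mpr hM.ne'
  have hMC : (M : ℂ) ≠ 0 := Nat.cast_ne_zero.mpr hM.ne'
  set z : ℂ := Complex.exp (2 * Real.pi / M * Complex.I) with hzdef
  have hz0 : z ≠ 0 := Complex.exp_ne_zero _
  have hzM : z ^ (M : ℕ) = 1 := z_pow_M hM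
  have hziff : ∀ k : ℤ, z ^ k = 1 ↔ (M : ℤ) ∣ k := fun k => z_zpow_eq_one_iff hM k
  -- the set of Fourier modes
  set c : ℤ := (M : ℤ) / 2 with hcdef
  have hc : 2 * c = (M : ℤ) := by
    obtain ⟨m, hm⟩ := hMeven
    omega
  have hIccEq : Finset.Icc (-(M : ℤ) / 2) ((M : ℤ) / 2 - 1) = Finset.Icc (-c) (c - 1) := by
    congr 1
    omega
  -- exponential identities
  have hreal : ∀ (ℓ : ℤ) (j : ℕ), ω ℓ * (x j - a) = 2 * Real.pi * (ℓ * j) / M := by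
    intro ℓ j
    rw [hω, hx]
    field_simp
    ring
  have hE : ∀ (ℓ : ℤ) (j : Fin M),
      Complex.exp (Complex.I * (ω ℓ) * ((x j : ℝ) - a)) = z ^ (ℓ * (j : ℤ)) := by
    intro ℓ j
    rw [hzdef, ← Complex.exp_int_mul]
    rw [show (Complex.I * (ω ℓ) * (((x (j : ℕ) : ℝ) : ℂ) - (a : ℂ)))
        = ((ω ℓ * (x (j : ℕ) - a) : ℝ) : ℂ) * Complex.I by push_cast; ring, hreal ℓ j]
    congr 1
    push_cast
    ring
  have hEneg : ∀ (ℓ : ℤ) (j : Fin M),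
      Complex.exp (-Complex.I * (ω ℓ) * ((x j : ℝ) - a)) = z ^ (-(ℓ * (j : ℤ))) := by
    intro ℓ j
    rw [hzdef, ← Complex.exp_int_mul]
    rw [show (-Complex.I * (ω ℓ) * (((x (j : ℕ) : ℝ) : ℂ) - (a : ℂ)))
        = -(((ω ℓ * (x (j : ℕ) - a) : ℝ) : ℂ) * Complex.I) by push_cast; ring, hreal ℓ j]
    congr 1
    push_cast
    ring
  -- conjugation of powers of z
  have hconjz : ∀ k : ℤ, (starRingEnd ℂ) (z ^ k) = z ^ (-k) := by
    intro k
    have hcz : (starRingEnd ℂ) z = z⁻¹ := by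
      rw [hzdef, ← Complex.exp_conj, ← Complex.exp_neg]
      congr 1
      simp [map_div₀, Complex.conj_I, map_ofNat]
    rw [map_zpow₀, hcz, inv_zpow, ← zpow_neg]
  -- orthogonality over Fin M
  have horth1 : ∀ k : ℤ, ∑ j : Fin M, z ^ (k * (j : ℤ)) =
      if (M : ℤ) ∣ k then (M : ℂ) else 0 := by
    intro k
    have h1 : ∀ j : Fin M, z ^ (k * (j : ℤ)) = (z ^ k) ^ (j : ℕ) := by
      intro j
      rw [zpow_mul, zpow_natCast]
    simp only [h1]
    rw [Fin.sum_univ_eq_sum_range (fun t => (z ^ k) ^ t) M]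
    rw [geo_nat (z ^ k) (by rw [← zpow_natCast (z ^ k), ← zpow_mul, mul_comm,
      zpow_mul, zpow_natCast, hzM, one_zpow])]
    simp only [hziff k]
  -- orthogonality over the mode set
  have horth2 : ∀ k : ℤ, ∑ ℓ ∈ Finset.Icc (-c) (c - 1), z ^ (k * ℓ) =
      if (M : ℤ) ∣ k then (M : ℂ) else 0 := by
    intro k
    have h1 : ∀ ℓ : ℤ, z ^ (k * ℓ) = (z ^ k) ^ ℓ := by
      intro ℓ; rw [zpow_mul]
    simp only [h1]
    rw [geo_Icc hM hc (z ^ k) (zpow_ne_zero _ hz0) (by rw [← zpow_natCast (z ^ k), ← zpow_mul, mul_comm,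
      zpow_mul, zpow_natCast, hzM, one_zpow])]
    simp only [hziff k]
  -- divisibility within the windows
  have hdvdI : ∀ ℓ ∈ Finset.Icc (-c) (c - 1), ∀ ℓ' ∈ Finset.Icc (-c) (c - 1),
      ((M : ℤ) ∣ (ℓ - ℓ') ↔ ℓ = ℓ') := by
    intro ℓ hℓ ℓ' hℓ'
    simp only [Finset.mem_Icc] at hℓ hℓ'
    constructor
    · intro hd
      have h0 : ℓ - ℓ' = 0 := Int.eq_zero_of_abs_lt_dvd hd (by rw [abs_lt]; omega)
      omega
    · intro hd; simp [hd]
  have hdvdF : ∀ j j' : Fin M, ((M : ℤ) ∣ ((j' : ℤ) - (j : ℤ)) ↔ j = j') := by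
    intro j j'
    have h1 := j.isLt
    have h2 := j'.isLt
    constructor
    · intro hd
      have h0 : (j' : ℤ) - (j : ℤ) = 0 := Int.eq_zero_of_abs_lt_dvd hd (by rw [abs_lt]; omega)
      apply Fin.ext
      omega
    · intro hd; simp [hd]
  -- unimodular factors
  have hphase : ∀ (t : ℝ), Complex.exp (Complex.I * t) * (starRingEnd ℂ) (Complex.exp (Complex.I * t)) = 1 := by
    intro t
    rw [← Complex.exp_conj, ← Complex.exp_add]
    simp [map_mul, Complex.conj_I, Complex.conj_ofReal]
  -- key step: mass is conserved in one step (as complex sums of f * conj f)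
  have key : ∀ n : ℕ, (∑ j : Fin M, ψ (n+1) j * (starRingEnd ℂ) (ψ (n+1) j)) =
      ∑ j : Fin M, ψ n j * (starRingEnd ℂ) (ψ n j) := by
    intro n
    set cf : ℤ → ℂ := fun ℓ => Complex.exp (-Complex.I * h * Δt * (ω ℓ) ^ 2 / 2) * ψhat n ℓ with hcf
    have hψstar : ∀ j : Fin M, ψstar n j =
        (1 / (M : ℂ)) * ∑ ℓ ∈ Finset.Icc (-c) (c - 1), cf ℓ * z ^ (ℓ * (j : ℤ)) := by
      intro j
      rw [hstep1, hIccEq]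
      congr 1
      refine Finset.sum_congr rfl fun ℓ _ => ?_
      rw [hE ℓ j]
    have hψstarc : ∀ j : Fin M, (starRingEnd ℂ) (ψstar n j) =
        (1 / (M : ℂ)) * ∑ ℓ ∈ Finset.Icc (-c) (c - 1), (starRingEnd ℂ) (cf ℓ) * z ^ (-(ℓ * (j : ℤ))) := by
      intro j
      rw [hψstar j, map_mul, map_sum]
      congr 1
      · simp
      · refine Finset.sum_congr rfl fun ℓ _ => ?_
        rw [map_mul, hconjz]
    -- step A: ∑ |ψstar|² = (1/M) ∑ |ψhat|²
    have hA : (∑ j : Fin M, ψstar n j * (starRingEnd ℂ) (ψstar n j)) =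
        (1 / (M : ℂ)) * ∑ ℓ ∈ Finset.Icc (-c) (c - 1), ψhat n ℓ * (starRingEnd ℂ) (ψhat n ℓ) := by
      have e1 : ∀ j : Fin M, ψstar n j * (starRingEnd ℂ) (ψstar n j) =
          ∑ ℓ ∈ Finset.Icc (-c) (c - 1), ∑ ℓ' ∈ Finset.Icc (-c) (c - 1),
            (1 / (M : ℂ)) * (1 / (M : ℂ)) * ((cf ℓ * (starRingEnd ℂ) (cf ℓ')) * z ^ ((ℓ - ℓ') * (j : ℤ))) := by
        intro j
        rw [hψstarc j, hψstar j, mul_mul_mul_comm, Finset.sum_mul_sum]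
        simp only [Finset.mul_sum]
        refine Finset.sum_congr rfl fun ℓ _ => ?_
        refine Finset.sum_congr rfl fun ℓ' _ => ?_
        have hexp : (ℓ - ℓ') * (j : ℤ) = ℓ * (j : ℤ) + -(ℓ' * (j : ℤ)) := by ring
        rw [hexp, zpow_add₀ hz0]
        ring
      calc (∑ j : Fin M, ψstar n j * (starRingEnd ℂ) (ψstar n j))
          = ∑ j : Fin M, ∑ ℓ ∈ Finset.Icc (-c) (c - 1), ∑ ℓ' ∈ Finset.Icc (-c) (c - 1),
            (1 / (M : ℂ)) * (1 / (M : ℂ)) * ((cf ℓ * (starRingEnd ℂ) (cf ℓ')) * z ^ ((ℓ - ℓ') * (j : ℤ))) := by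
            exact Finset.sum_congr rfl fun j _ => e1 j
        _ = ∑ ℓ ∈ Finset.Icc (-c) (c - 1), ∑ ℓ' ∈ Finset.Icc (-c) (c - 1),
            (1 / (M : ℂ)) * (1 / (M : ℂ)) * ((cf ℓ * (starRingEnd ℂ) (cf ℓ')) * ∑ j : Fin M, z ^ ((ℓ - ℓ') * (j : ℤ))) := by
            rw [Finset.sum_comm]
            refine Finset.sum_congr rfl fun ℓ _ => ?_
            rw [Finset.sum_comm]
            refine Finset.sum_congr rfl fun ℓ' _ => ?_
            simp only [Finset.mul_sum]
        _ = (1 / (M : ℂ)) * ∑ ℓ ∈ Finset.Icc (-c) (c - 1), ψhat n ℓ * (starRingEnd ℂ) (ψhat n ℓ) := by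
            rw [Finset.mul_sum]
            refine Finset.sum_congr rfl fun ℓ hℓ => ?_
            rw [Finset.sum_eq_single ℓ]
            · rw [horth1, if_pos (by simp)]
              have hcc : cf ℓ * (starRingEnd ℂ) (cf ℓ) = ψhat n ℓ * (starRingEnd ℂ) (ψhat n ℓ) := by
                rw [hcf]
                dsimp only
                rw [map_mul]
                have ht : (-Complex.I * h * Δt * (ω ℓ) ^ 2 / 2 : ℂ) =
                    Complex.I * ((- (h * Δt * (ω ℓ) ^ 2 / 2) : ℝ) : ℂ) := by
                  push_cast; ring
                have := hphase (- (h * Δt * (ω ℓ) ^ 2 / 2) : ℝ)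
                rw [ht]
                calc Complex.exp (Complex.I * ((- (h * Δt * (ω ℓ) ^ 2 / 2) : ℝ) : ℂ)) * ψhat n ℓ *
                      ((starRingEnd ℂ) (Complex.exp (Complex.I * ((- (h * Δt * (ω ℓ) ^ 2 / 2) : ℝ) : ℂ))) * (starRingEnd ℂ) (ψhat n ℓ))
                    = (Complex.exp (Complex.I * ((- (h * Δt * (ω ℓ) ^ 2 / 2) : ℝ) : ℂ)) *
                      (starRingEnd ℂ) (Complex.exp (Complex.I * ((- (h * Δt * (ω ℓ) ^ 2 / 2) : ℝ) : ℂ)))) *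
                      (ψhat n ℓ * (starRingEnd ℂ) (ψhat n ℓ)) := by ring
                  _ = ψhat n ℓ * (starRingEnd ℂ) (ψhat n ℓ) := by rw [this, one_mul]
              rw [hcc]
              field_simp
            · intro ℓ' hℓ' hne
              rw [horth1, if_neg, mul_zero, mul_zero]
              rw [hdvdI ℓ hℓ ℓ' hℓ']
              exact fun hcontra => hne hcontra.symm
            · intro hcontra
              exact absurd hℓ hcontra
      -- step B: ∑ |ψhat|² = M ∑ |ψ|²
    have hB : (∑ ℓ ∈ Finset.Icc (-c) (c - 1), ψhat n ℓ * (starRingEnd ℂ) (ψhat n ℓ)) =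
        (M : ℂ) * ∑ j : Fin M, ψ n j * (starRingEnd ℂ) (ψ n j) := by
      have hψhat' : ∀ ℓ : ℤ, ψhat n ℓ = ∑ j : Fin M, ψ n j * z ^ (-(ℓ * (j : ℤ))) := by
        intro ℓ
        rw [hψhat]
        exact Finset.sum_congr rfl fun j _ => by rw [hEneg ℓ j]
      have hψhatc : ∀ ℓ : ℤ, (starRingEnd ℂ) (ψhat n ℓ) =
          ∑ j : Fin M, (starRingEnd ℂ) (ψ n j) * z ^ (ℓ * (j : ℤ)) := by
        intro ℓ
        rw [hψhat' ℓ, map_sum]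
        refine Finset.sum_congr rfl fun j _ => ?_
        rw [map_mul, hconjz, neg_neg]
      calc (∑ ℓ ∈ Finset.Icc (-c) (c - 1), ψhat n ℓ * (starRingEnd ℂ) (ψhat n ℓ))
          = ∑ ℓ ∈ Finset.Icc (-c) (c - 1), ∑ j : Fin M, ∑ j' : Fin M,
            (ψ n j * (starRingEnd ℂ) (ψ n j')) * z ^ (ℓ * ((j' : ℤ) - (j : ℤ))) := by
            refine Finset.sum_congr rfl fun ℓ _ => ?_
            rw [hψhatc ℓ, hψhat' ℓ, Finset.sum_mul_sum]
            refine Finset.sum_congr rfl fun j _ => ?_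
            refine Finset.sum_congr rfl fun j' _ => ?_
            have hexp : ℓ * ((j' : ℤ) - (j : ℤ)) = -(ℓ * (j : ℤ)) + ℓ * (j' : ℤ) := by ring
            rw [hexp, zpow_add₀ hz0]
            ring
        _ = ∑ j : Fin M, ∑ j' : Fin M,
            (ψ n j * (starRingEnd ℂ) (ψ n j')) * ∑ ℓ ∈ Finset.Icc (-c) (c - 1), z ^ (ℓ * ((j' : ℤ) - (j : ℤ))) := by
            rw [Finset.sum_comm]
            refine Finset.sum_congr rfl fun j _ => ?_
            rw [Finset.sum_comm]
            refine Finset.sum_congr rfl fun j' _ => ?_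
            simp only [Finset.mul_sum]
        _ = (M : ℂ) * ∑ j : Fin M, ψ n j * (starRingEnd ℂ) (ψ n j) := by
            rw [Finset.mul_sum]
            refine Finset.sum_congr rfl fun j _ => ?_
            rw [Finset.sum_eq_single j]
            · have : ∀ ℓ : ℤ, z ^ (ℓ * ((j : ℤ) - (j : ℤ))) = z ^ (((j : ℤ) - (j : ℤ)) * ℓ) := by
                intro ℓ; rw [mul_comm]
              simp only [this]
              rw [horth2, if_pos (by simp)]
              ring
            · intro j' hj' hne
              have : ∀ ℓ : ℤ, z ^ (ℓ * ((j' : ℤ) - (j : ℤ))) = z ^ (((j' : ℤ) - (j : ℤ)) * ℓ) := by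
                intro ℓ; rw [mul_comm]
              simp only [this]
              rw [horth2, if_neg, mul_zero]
              rw [hdvdF j j']
              exact fun hcontra => hne hcontra.symm
            · intro hcontra
              exact absurd (Finset.mem_univ j) hcontra
    -- step 2 preserves the sums
    have hC : (∑ j : Fin M, ψ (n+1) j * (starRingEnd ℂ) (ψ (n+1) j)) =
        ∑ j : Fin M, ψstar n j * (starRingEnd ℂ) (ψstar n j) := by
      refine Finset.sum_congr rfl fun j _ => ?_
      rw [hstep2, map_mul]
      have ht : (-Complex.I * (Υ n j) * Δt / h : ℂ) =
          Complex.I * ((- ((Υ n j) * Δt / h) : ℝ) : ℂ) := by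
        push_cast; ring
      rw [ht]
      have := hphase (- ((Υ n j) * Δt / h) : ℝ)
      calc Complex.exp (Complex.I * ((- ((Υ n j) * Δt / h) : ℝ) : ℂ)) * ψstar n j *
            ((starRingEnd ℂ) (Complex.exp (Complex.I * ((- ((Υ n j) * Δt / h) : ℝ) : ℂ))) * (starRingEnd ℂ) (ψstar n j))
          = (Complex.exp (Complex.I * ((- ((Υ n j) * Δt / h) : ℝ) : ℂ)) *
            (starRingEnd ℂ) (Complex.exp (Complex.I * ((- ((Υ n j) * Δt / h) : ℝ) : ℂ)))) *
            (ψstar n j * (starRingEnd ℂ) (ψstar n j)) := by ring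
        _ = ψstar n j * (starRingEnd ℂ) (ψstar n j) := by rw [this, one_mul]
    rw [hC, hA, hB]
    field_simp
  -- transfer to real sums
  have keyR : ∀ n : ℕ, (∑ j : Fin M, ‖ψ (n+1) j‖ ^ 2) =
      ∑ j : Fin M, ‖ψ n j‖ ^ 2 := by
    intro n
    have conv : ∀ g : Fin M → ℂ,
        ((∑ j : Fin M, ‖g j‖ ^ 2 : ℝ) : ℂ) = ∑ j : Fin M, g j * (starRingEnd ℂ) (g j) := by
      intro g
      push_cast
      refine Finset.sum_congr rfl fun j _ => ?_
      rw [Complex.mul_conj]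
      norm_cast
      exact Complex.sq_norm _
    have := key n
    rw [← conv, ← conv] at this
    exact_mod_cast this
  have main : ∀ m : ℕ, (∑ j : Fin M, ‖ψ m j‖ ^ 2) =
      ∑ j : Fin M, ‖ψ 0 j‖ ^ 2 := by
    intro m
    induction m with
    | zero => rfl
    | succ k ih => rw [keyR k, ih]
  intro n _
  rw [main n]
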